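/- Let w ∈ FreeGroup α and let ι : FreeGroup α →* FreeGroup (Option α) be the homomorphism induced by Option.some. If ι(w) commutes with the generator z = FreeGroup.of none in FreeGroup (Option α), then w = 1. -/

import Mathlib

open FreeGroup in
private lemma aux_reduce_of_chain' {β : Type*} [DecidableEq β] :
    ∀ (L : List (β × Bool)),
      L.Chain' (fun p q => ¬(p.1 = q.1 ∧ p.2 = !q.2)) → FreeGroup.reduce L = L
  | [], _ => rfl
  | [a], _ => rfl
  | a :: b :: L, h => by
    have hL : FreeGroup.reduce (b :: L) = b :: L :=
      aux_reduce_of_chain' (b :: L) h.tail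
    have hab : ¬(a.1 = b.1 ∧ a.2 = !b.2) := (List.isChain_cons_cons.mp h).1
    rw [FreeGroup.reduce.cons, hL]
    simp [hab]

open FreeGroup in
private lemma aux_chain'_of_reduce {β : Type*} [DecidableEq β] :
    ∀ (L : List (β × Bool)), FreeGroup.reduce L = L →
      L.Chain' (fun p q => ¬(p.1 = q.1 ∧ p.2 = !q.2))
  | [], _ => List.isChain_nil
  | a :: L, h => by
    rw [FreeGroup.reduce.cons] at h
    rcases hr : FreeGroup.reduce L with _ | ⟨hd, tl⟩
    · rw [hr] at h
      simp only at h
      have : L = [] := by simpa using congrArg List.tail h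
      subst this
      exact List.isChain_singleton _
    · rw [hr] at h
      by_cases hc : a.1 = hd.1 ∧ a.2 = !hd.2
      · exfalso
        simp only [hc, if_true, and_self, if_pos] at h
        -- h : tl = a :: L, impossible by length
        have hlen : (FreeGroup.reduce L).length ≤ L.length :=
          FreeGroup.Red.length_le (FreeGroup.reduce.red)
        rw [hr] at hlen
        have := congrArg List.length h
        simp at this hlen
        omega
      · simp only [if_neg hc] at h
        have hL : L = hd :: tl := by simpa using (congrArg List.tail h).symm
        have : FreeGroup.reduce L = L := by rw [hr, hL]
        have hch := aux_chain'_of_reduce L this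
        rw [hL]
        exact List.isChain_cons_cons.mpr ⟨hc, hL ▸ hch⟩

private lemma aux_reduce_map {β γ : Type*} [DecidableEq β] [DecidableEq γ]
    {f : β → γ} (hf : Function.Injective f) :
    ∀ (L : List (β × Bool)),
      FreeGroup.reduce (L.map (fun x => (f x.1, x.2))) =
        (FreeGroup.reduce L).map (fun x => (f x.1, x.2))
  | [] => rfl
  | a :: L => by
    rw [List.map_cons, FreeGroup.reduce.cons, FreeGroup.reduce.cons,
      aux_reduce_map hf L]
    rcases FreeGroup.reduce L with _ | ⟨hd, tl⟩
    · rfl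
    · simp only [List.map_cons]
      by_cases hc : a.1 = hd.1 ∧ a.2 = !hd.2
      · rw [if_pos hc, if_pos ⟨congrArg f hc.1, hc.2⟩]
      · rw [if_neg hc, if_neg (fun hc' => hc ⟨hf hc'.1, hc'.2⟩)]
        simp

private lemma aux_all_eq_of_append_eq_cons {γ : Type*} :
    ∀ (l : List γ) (a : γ), l ++ [a] = a :: l → ∀ x ∈ l, x = a
  | [], _, _ => by simp
  | b :: t, a, h => by
    simp only [List.cons_append, List.cons.injEq] at h
    intro x hx
    rcases List.mem_cons.mp hx with rfl | hx
    · exact h.1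
    · exact aux_all_eq_of_append_eq_cons t a (h.1 ▸ h.2) x hx

/-- If the image of `w : FreeGroup α` in `FreeGroup (Option α)` (under the embedding
induced by `Option.some`) commutes with the extra generator `z = FreeGroup.of none`,
then `w = 1`. -/
theorem eq_one_of_commute_with_new_letter {α : Type*} (w : FreeGroup α)
    (h : Commute (FreeGroup.map Option.some w) (FreeGroup.of (none : Option α))) :
    w = 1 := by
  classical
  set ι := FreeGroup.map (Option.some : α → Option α) with hι
  -- the reduced word of ι w
  have hsome : Function.Injective (Option.some : α → Option α) := Option.some_injective α
  have hword : (ι w).toWord = (w.toWord).map (fun x => (Option.some x.1, x.2)) := by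
    conv_lhs => rw [← FreeGroup.mk_toWord (x := w)]
    rw [hι, FreeGroup.map.mk, FreeGroup.toWord_mk, aux_reduce_map hsome,
      FreeGroup.reduce_toWord]
  set L := (ι w).toWord with hL
  have hnone : ∀ p ∈ L, p.1 ≠ (none : Option α) := by
    intro p hp
    rw [hword] at hp
    rcases List.mem_map.mp hp with ⟨q, _, rfl⟩
    simp
  have hred : FreeGroup.reduce L = L := FreeGroup.reduce_toWord _
  have hchain := aux_chain'_of_reduce L hred
  have hcond : ∀ (p q : (Option α) × Bool), p.1 ≠ none → q.1 ≠ none →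
      True := fun _ _ _ _ => trivial
  -- reduced word of (ι w) * z
  have h1 : ((ι w) * FreeGroup.of (none : Option α)).toWord = L ++ [(none, true)] := by
    have : (ι w) * FreeGroup.of (none : Option α) = FreeGroup.mk (L ++ [(none, true)]) := by
      rw [← FreeGroup.mul_mk, hL, FreeGroup.mk_toWord]
      rfl
    rw [this, FreeGroup.toWord_mk]
    apply aux_reduce_of_chain'
    apply List.IsChain.append hchain (List.isChain_singleton _)
    intro x hx y hy
    have hx' := List.mem_of_mem_getLast? hx
    have hy' : ((none, true) : Option α × Bool) = y := by simpa using hy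
    subst hy'
    intro hc
    exact hnone x hx' hc.1
  have h2 : (FreeGroup.of (none : Option α) * (ι w)).toWord = (none, true) :: L := by
    have : FreeGroup.of (none : Option α) * (ι w) = FreeGroup.mk ((none, true) :: L) := by
      rw [show (((none, true) :: L) : List (Option α × Bool)) = [((none : Option α), true)] ++ L
        from rfl, ← FreeGroup.mul_mk, hL, FreeGroup.mk_toWord]
      rfl
    rw [this, FreeGroup.toWord_mk]
    apply aux_reduce_of_chain'
    apply List.isChain_cons.mpr
    constructor
    · intro y hy hc
      exact hnone y (List.mem_of_mem_head? hy) (hc.1.symm)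
    · exact hchain
  have heq : L ++ [((none : Option α), true)] = (none, true) :: L := by
    rw [← h1, ← h2, h]
  have hLnil : L = [] := by
    rcases L with _ | ⟨p, L'⟩
    · rfl
    · exfalso
      have := aux_all_eq_of_append_eq_cons _ _ heq p (by simp)
      exact hnone p (by simp) (by rw [this])
  have : ι w = 1 := FreeGroup.toWord_eq_nil_iff.mp hLnil
  have hwnil : w.toWord = [] :=
    List.map_eq_nil_iff.mp (by rw [← hword]; exact hLnil)
  exact FreeGroup.toWord_eq_nil_iff.mp hwnil
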